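/- Let A : ℤ → M(d,ℝ) admit an exponential dichotomy on ℤ_κ^− = {n ≤ κ} with regular projector P : ℤ_κ^− → M(d,ℝ), K ≥ 1, α ∈ (0,1). Then the kernel of the operator L⁻_κ : ℓ⁻_{0κ}(ℝ^d) → ℓ⁻_{0,κ−1}(ℝ^d), (L⁻_κφ)(n) = 1_{n ≤ κ−1}(φ(n+1) − A(n)φ(n)), is {φ : φ(n) = Φ(n,κ)x for n ≤ κ, x ∈ ker P(κ)}, where Φ(n,κ) for n ≤ κ on ker P(κ) denotes the inverse of Φ(κ,n)|ker P(n). In particular ker L⁻_κ is linearly isomorphic to ker P(κ), so dim ker L⁻_κ = dim ker P(κ). -/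

import Mathlib

/-- kernel characterization for the negative half-line operator `L⁻_κ`:
a sequence in `ℓ⁻_{0κ}(ℝ^d)` solves the equation on `{n ≤ κ-1}` iff `φ(κ) ∈ ker P(κ)`
and, for each `n ≤ κ`, `φ(n)` lies in `ker P(n)` with `Φ(κ,n)φ(n) = φ(κ)` (i.e.
`φ(n) = Φ(n,κ)φ(κ)` via the inverse of the restriction of `Φ(κ,n)` to `ker P(n)`). -/
theorem stmt_8 {d : ℕ} (κ : ℤ)
    (A : ℤ → (EuclideanSpace ℝ (Fin d) →L[ℝ] EuclideanSpace ℝ (Fin d)))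
    (hA : ∃ C, ∀ n, ‖A n‖ ≤ C)
    (Φ : ℤ → ℤ → (EuclideanSpace ℝ (Fin d) →L[ℝ] EuclideanSpace ℝ (Fin d)))
    (hΦ0 : ∀ n, Φ n n = 1)
    (hΦ1 : ∀ k n : ℤ, n ≤ k → Φ (k + 1) n = (A k).comp (Φ k n))
    (P : ℤ → (EuclideanSpace ℝ (Fin d) →L[ℝ] EuclideanSpace ℝ (Fin d)))
    (hproj : ∀ n ≤ κ, (P n).comp (P n) = P n)
    (hinva : ∀ n : ℤ, n + 1 ≤ κ → (P (n + 1)).comp (A n) = (A n).comp (P n))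
    (hPbdd : ∃ C, ∀ n ≤ κ, ‖P n‖ ≤ C)
    (hreg : ∀ n : ℤ, n + 1 ≤ κ →
      Set.BijOn (A n) {x | P n x = 0} {x | P (n + 1) x = 0})
    (K α : ℝ) (hK : 1 ≤ K) (hα : α ∈ Set.Ioo (0 : ℝ) 1)
    (hED1 : ∀ k n : ℤ, n ≤ k → k ≤ κ → ∀ x,
      ‖Φ k n (P n x)‖ ≤ K * α ^ (k - n) * ‖P n x‖)
    (hED2 : ∀ k n : ℤ, n ≤ k → k ≤ κ → ∀ x,
      ‖Φ k n (x - P n x)‖ ≥ (1 / K) * (1 / α) ^ (k - n) * ‖x - P n x‖)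
    (φ : ℤ → EuclideanSpace ℝ (Fin d))
    (hφsupp : ∀ n : ℤ, κ < n → φ n = 0)
    (hφ0 : Filter.Tendsto φ Filter.atBot (nhds 0)) :
    (∀ n : ℤ, n < κ → φ (n + 1) = A n (φ n)) ↔
      (P κ (φ κ) = 0 ∧ ∀ n ≤ κ, P n (φ n) = 0 ∧ Φ κ n (φ n) = φ κ) := by

  obtain ⟨α0, α1⟩ := hα
  obtain ⟨CP, hCP⟩ := hPbdd
  -- cocycle: Φ k (n+1) ∘ A n = Φ k n
  have cocycle : ∀ n x, ∀ k, n + 1 ≤ k → Φ k (n + 1) (A n x) = Φ k n x := by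
    intro n x k hk
    refine Int.le_induction (motive := fun k _ => Φ k (n + 1) (A n x) = Φ k n x) ?_ ?_ k hk
    · show Φ (n + 1) (n + 1) (A n x) = Φ (n + 1) n x
      rw [hΦ0, hΦ1 n n le_rfl, hΦ0]
      rfl
    · intro k hk ih
      rw [hΦ1 k (n + 1) hk, hΦ1 k n (by omega)]
      simp only [ContinuousLinearMap.comp_apply, ih]
  -- commutation: Φ n m (P m x) = P n (Φ n m x) for m ≤ n ≤ κ
  have comm : ∀ m n : ℤ, m ≤ n → n ≤ κ → ∀ x, Φ n m (P m x) = P n (Φ n m x) := by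
    intro m n hmn
    refine Int.le_induction
      (motive := fun n _ => n ≤ κ → ∀ x, Φ n m (P m x) = P n (Φ n m x)) ?_ ?_ n hmn
    · intro _ x; rw [hΦ0]; rfl
    · intro n hn ih hκ x
      rw [hΦ1 n m hn]
      simp only [ContinuousLinearMap.comp_apply]
      rw [ih (by omega) x]
      have := congrArg (fun T => T (Φ n m x)) (hinva n hκ)
      simpa using this.symm
  constructor
  · intro hsol
    -- trajectory: Φ n m (φ m) = φ n for m ≤ n ≤ κ
    have traj : ∀ m n : ℤ, m ≤ n → n ≤ κ → Φ n m (φ m) = φ n := by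
      intro m n hmn
      refine Int.le_induction
        (motive := fun n _ => n ≤ κ → Φ n m (φ m) = φ n) ?_ ?_ n hmn
      · intro _
        show Φ m m (φ m) = φ m
        rw [hΦ0]; rfl
      · intro n hn ih hκ
        rw [hΦ1 n m hn]
        simp only [ContinuousLinearMap.comp_apply]
        rw [ih (by omega)]
        exact (hsol n (by omega)).symm
    have hker : ∀ n ≤ κ, P n (φ n) = 0 := by
      intro n hn
      have hbound : ∀ m : ℤ, m ≤ n → ‖P n (φ n)‖ ≤ K * CP * ‖φ m‖ := by
        intro m hm
        have h1 : Φ n m (P m (φ m)) = P n (φ n) := by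
          rw [comm m n hm hn, traj m n hm hn]
        calc ‖P n (φ n)‖ = ‖Φ n m (P m (φ m))‖ := by rw [h1]
          _ ≤ K * α ^ (n - m) * ‖P m (φ m)‖ := hED1 n m hm hn _
          _ ≤ K * 1 * (CP * ‖φ m‖) := by
              apply mul_le_mul
              · apply mul_le_mul_of_nonneg_left _ (by linarith)
                exact zpow_le_one₀ α0 α1.le (by omega)
              · calc ‖P m (φ m)‖ ≤ ‖P m‖ * ‖φ m‖ := (P m).le_opNorm _
                  _ ≤ CP * ‖φ m‖ := by
                      apply mul_le_mul_of_nonneg_right (hCP m (by omega)) (norm_nonneg _)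
              · exact norm_nonneg _
              · positivity
          _ = K * CP * ‖φ m‖ := by ring
      have htend : Filter.Tendsto (fun m => K * CP * ‖φ m‖) Filter.atBot (nhds 0) := by
        have := (hφ0.norm).const_mul (K * CP)
        simpa using this
      have hle : ‖P n (φ n)‖ ≤ 0 :=
        ge_of_tendsto htend (Filter.eventually_atBot.mpr ⟨n, hbound⟩)
      exact norm_le_zero_iff.mp hle
    exact ⟨hker κ le_rfl, fun n hn => ⟨hker n hn, traj n κ hn le_rfl⟩⟩
  · rintro ⟨hκ0, hk⟩ n hn
    set x := φ (n + 1) - A n (φ n) with hx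
    have hPx : P (n + 1) x = 0 := by
      have h1 : P (n + 1) (φ (n + 1)) = 0 := (hk (n + 1) (by omega)).1
      have h2 : P (n + 1) (A n (φ n)) = A n (P n (φ n)) := by
        have := congrArg (fun T => T (φ n)) (hinva n (by omega))
        simpa using this
      simp [hx, h1, h2, (hk n (by omega)).1]
    have hΦx : Φ κ (n + 1) x = 0 := by
      have h1 : Φ κ (n + 1) (φ (n + 1)) = φ κ := (hk (n + 1) (by omega)).2
      have h2 : Φ κ (n + 1) (A n (φ n)) = φ κ := by
        rw [cocycle n (φ n) κ (by omega)]
        exact (hk n (by omega)).2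
      simp [hx, h1, h2]
    have hED := hED2 κ (n + 1) (by omega) le_rfl x
    rw [hPx, sub_zero, hΦx] at hED
    have hpos : 0 < (1 / K) * (1 / α) ^ (κ - (n + 1)) := by positivity
    have : ‖x‖ ≤ 0 := by
      by_contra h
      push_neg at h
      have := mul_pos hpos h
      simp only [norm_zero] at hED
      linarith
    have hx0 : x = 0 := norm_le_zero_iff.mp this
    exact sub_eq_zero.mp hx0
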